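/- Let R be a ring and suppose the right R-module R_R is cancellable in the category of finitely generated right R-modules (R ⊕ A ≅ R ⊕ B implies A ≅ B for f.g. modules A, B). If I and J are right ideals with R/I ≅ R/J and J principal, then I is principal. In particular, the family of principal right ideals is closed under similarity. -/

import Mathlib

universe u

open MulOpposite in
noncomputable def stmt17.eop (R : Type u) [Ring R] : R ≃ₗ[Rᵐᵒᵖ] Rᵐᵒᵖ where
  toFun := op
  invFun := unop
  map_add' := by simp
  map_smul' := fun r a => by
    simp only [MulOpposite.smul_eq_mul_unop, RingHom.id_apply, op_mul, op_unop]
    rfl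
  left_inv := fun _ => rfl
  right_inv := fun _ => rfl

instance stmt17.projSelf (R : Type u) [Ring R] : Module.Projective Rᵐᵒᵖ R :=
  Module.Projective.of_equiv (stmt17.eop R).symm

/-- A split surjection induces a product decomposition. -/
noncomputable def stmt17.splitEquiv {S M N : Type*} [Ring S] [AddCommGroup M] [Module S M]
    [AddCommGroup N] [Module S N] (f : M →ₗ[S] N) (s : N →ₗ[S] M)
    (hs : ∀ n, f (s n) = n) : M ≃ₗ[S] N × LinearMap.ker f where
  toFun m := (f m, ⟨m - s (f m), by simp [hs]⟩)
  invFun p := s p.1 + p.2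
  map_add' m m' := by
    refine Prod.ext (by simp) (Subtype.ext ?_)
    rw [Prod.snd_add]
    push_cast
    simp only [map_add]
    abel
  map_smul' c m := by
    refine Prod.ext (by simp) (Subtype.ext ?_)
    simp only [map_smul, RingHom.id_apply, Prod.smul_snd, SetLike.val_smul, smul_sub]
  left_inv m := by simp
  right_inv p := by
    ext
    · simp [hs, LinearMap.mem_ker.mp p.2.2]
    · simp [hs, LinearMap.mem_ker.mp p.2.2]

section schanuel
variable {S M N P : Type u} [Ring S] [AddCommGroup M] [Module S M]
  [AddCommGroup N] [Module S N] [AddCommGroup P] [Module S P]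
  (φ : M →ₗ[S] P) (ψ : N →ₗ[S] P)

/-- The pullback of `φ` and `ψ`. -/
noncomputable def stmt17.pb : Submodule S (M × N) :=
  LinearMap.ker (φ.comp (LinearMap.fst S M N) - ψ.comp (LinearMap.snd S M N))

noncomputable def stmt17.pbFst : (stmt17.pb φ ψ) →ₗ[S] M :=
  (LinearMap.fst S M N).comp (stmt17.pb φ ψ).subtype

theorem stmt17.pb_mem {a : M} {b : N} (h : φ a = ψ b) : (a, b) ∈ stmt17.pb φ ψ := by
  simp [stmt17.pb, LinearMap.mem_ker, h]

theorem stmt17.pbFst_surj (hψ : Function.Surjective ψ) :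
    Function.Surjective (stmt17.pbFst φ ψ) := by
  intro a
  obtain ⟨b, hb⟩ := hψ (φ a)
  exact ⟨⟨(a, b), stmt17.pb_mem φ ψ hb.symm⟩, rfl⟩

/-- The kernel of the first projection of the pullback is `ker ψ`. -/
noncomputable def stmt17.kerPbFst : LinearMap.ker (stmt17.pbFst φ ψ) ≃ₗ[S] LinearMap.ker ψ where
  toFun z := ⟨z.1.1.2, by
    have h1 : z.1.1.1 = 0 := z.2
    have h2 : φ z.1.1.1 - ψ z.1.1.2 = 0 := z.1.2
    rw [h1, map_zero] at h2
    simpa [LinearMap.mem_ker] using h2.symm⟩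
  invFun w := ⟨⟨(0, w.1), stmt17.pb_mem φ ψ (by simp [LinearMap.mem_ker.mp w.2])⟩, rfl⟩
  map_add' z z' := rfl
  map_smul' c z := rfl
  left_inv z := by
    apply Subtype.ext; apply Subtype.ext
    have h1 : z.1.1.1 = 0 := z.2
    exact Prod.ext h1.symm rfl
  right_inv w := rfl

/-- Schanuel's lemma. -/
theorem stmt17.schanuel [Module.Projective S M] [Module.Projective S N]
    (hφ : Function.Surjective φ) (hψ : Function.Surjective ψ) :
    Nonempty ((M × LinearMap.ker ψ) ≃ₗ[S] (N × LinearMap.ker φ)) := by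
  obtain ⟨s, hs⟩ := Module.projective_lifting_property (stmt17.pbFst φ ψ) LinearMap.id
    (stmt17.pbFst_surj φ ψ hψ)
  have hs' : ∀ m, stmt17.pbFst φ ψ (s m) = m := fun m => by simpa using DFunLike.congr_fun hs m
  -- second projection
  let pb2 := LinearMap.ker ((ψ.comp (LinearMap.fst S N M)) - (φ.comp (LinearMap.snd S N M)))
  obtain ⟨t, ht⟩ := Module.projective_lifting_property (stmt17.pbFst ψ φ) LinearMap.id
    (stmt17.pbFst_surj ψ φ hφ)
  have ht' : ∀ n, stmt17.pbFst ψ φ (t n) = n := fun n => by simpa using DFunLike.congr_fun ht n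
  -- swap equiv between the two pullbacks
  let sw : stmt17.pb φ ψ ≃ₗ[S] stmt17.pb ψ φ :=
    { toFun := fun z => ⟨(z.1.2, z.1.1), by
        have h : φ z.1.1 - ψ z.1.2 = 0 := z.2
        exact stmt17.pb_mem ψ φ (by rw [sub_eq_zero] at h; exact h.symm)⟩
      invFun := fun z => ⟨(z.1.2, z.1.1), by
        have h : ψ z.1.1 - φ z.1.2 = 0 := z.2
        exact stmt17.pb_mem φ ψ (by rw [sub_eq_zero] at h; exact h.symm)⟩
      map_add' := fun _ _ => rfl
      map_smul' := fun _ _ => rfl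
      left_inv := fun z => rfl
      right_inv := fun z => rfl }
  exact ⟨(((LinearEquiv.refl S M).prodCongr (stmt17.kerPbFst φ ψ)).symm.trans <|
    ((stmt17.splitEquiv (stmt17.pbFst φ ψ) s hs').symm.trans
      (sw.trans (stmt17.splitEquiv (stmt17.pbFst ψ φ) t ht')))).trans <|
    (LinearEquiv.refl S N).prodCongr (stmt17.kerPbFst ψ φ)⟩

end schanuel

theorem stmt17 (R : Type u) [Ring R]
    (hcancel : ∀ (A B : Type u) [AddCommGroup A] [Module Rᵐᵒᵖ A]
      [AddCommGroup B] [Module Rᵐᵒᵖ B], Module.Finite Rᵐᵒᵖ A →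
      Module.Finite Rᵐᵒᵖ B →
      Nonempty ((R × A) ≃ₗ[Rᵐᵒᵖ] (R × B)) → Nonempty (A ≃ₗ[Rᵐᵒᵖ] B))
    (I J : Submodule Rᵐᵒᵖ R)
    (hiso : Nonempty ((R ⧸ I) ≃ₗ[Rᵐᵒᵖ] (R ⧸ J)))
    (hJ : ∃ x : R, J = Submodule.span Rᵐᵒᵖ ({x} : Set R)) :
    ∃ y : R, I = Submodule.span Rᵐᵒᵖ ({y} : Set R) := by
  obtain ⟨e⟩ := hiso
  obtain ⟨x, hx⟩ := hJ
  -- two surjections onto R ⧸ J with kernels I and J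
  set φ : R →ₗ[Rᵐᵒᵖ] (R ⧸ J) := e.toLinearMap.comp I.mkQ with hφdef
  have hφ : Function.Surjective φ := e.surjective.comp (Submodule.mkQ_surjective I)
  have hψ : Function.Surjective J.mkQ := Submodule.mkQ_surjective J
  have hkφ : LinearMap.ker φ = I := by
    rw [hφdef, LinearMap.ker_comp, LinearEquiv.ker, Submodule.comap_bot, Submodule.ker_mkQ]
  have hkψ : LinearMap.ker J.mkQ = J := Submodule.ker_mkQ J
  obtain ⟨sch⟩ := stmt17.schanuel φ J.mkQ hφ hψ
  -- R × J ≃ R × I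
  let eJ : (LinearMap.ker J.mkQ) ≃ₗ[Rᵐᵒᵖ] J := LinearEquiv.ofEq _ _ hkψ
  let eI : (LinearMap.ker φ) ≃ₗ[Rᵐᵒᵖ] I := LinearEquiv.ofEq _ _ hkφ
  have key : Nonempty ((R × I) ≃ₗ[Rᵐᵒᵖ] (R × J)) :=
    ⟨((LinearEquiv.refl Rᵐᵒᵖ R).prodCongr eI).symm.trans (sch.symm.trans
      ((LinearEquiv.refl Rᵐᵒᵖ R).prodCongr eJ))⟩
  -- finiteness
  have hJfin : Module.Finite Rᵐᵒᵖ J := by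
    rw [Module.Finite.iff_fg, hx]
    exact Submodule.fg_span_singleton x
  have hIfin : Module.Finite Rᵐᵒᵖ I := by
    obtain ⟨g⟩ := key
    have hR : Module.Finite Rᵐᵒᵖ R := Module.Finite.equiv (stmt17.eop R).symm
    have : Module.Finite Rᵐᵒᵖ (R × J) := Module.Finite.prod
    have : Module.Finite Rᵐᵒᵖ (R × I) := Module.Finite.equiv g.symm
    exact Module.Finite.of_surjective (M := R × I) (LinearMap.snd Rᵐᵒᵖ R I)
      (fun i => ⟨(0, i), rfl⟩)
  obtain ⟨g⟩ := hcancel I J hIfin hJfin key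
  -- transfer cyclicity
  have hxJ : x ∈ J := by rw [hx]; exact Submodule.mem_span_singleton_self x
  refine ⟨(g.symm ⟨x, hxJ⟩ : I), le_antisymm ?_ ?_⟩
  · intro i hi
    have hsub : J ≤ Submodule.span Rᵐᵒᵖ {x} := le_of_eq hx
    obtain ⟨r, hr⟩ := Submodule.mem_span_singleton.mp (hsub (g ⟨i, hi⟩).2)
    have : g ⟨i, hi⟩ = r • (⟨x, hxJ⟩ : J) := Subtype.ext hr.symm
    have h2 : (⟨i, hi⟩ : I) = r • g.symm ⟨x, hxJ⟩ := by
      apply g.injective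
      rw [this, map_smul, g.apply_symm_apply]
    have h3 : r • (g.symm ⟨x, hxJ⟩ : R) = i := (congrArg Subtype.val h2).symm
    exact Submodule.mem_span_singleton.mpr ⟨r, h3⟩
  · rw [Submodule.span_le, Set.singleton_subset_iff]
    exact (g.symm ⟨x, hxJ⟩).2
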